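/- Let D be a division ring of characteristic 2 and H = M(2, D) with involution h* = J hᵗ J⁻¹ where J = [[0,1],[1,0]]. If a, c ∈ H satisfy Ha + Hc = H, then there exists s ∈ H^sym with a + sc ∈ H× (invertible). In particular H is *-Euclidean of decomposition length 1. -/
import Mathlib

open Matrix

/-- The involution h ↦ J hᵗ J⁻¹ on M(2,D) in characteristic 2, where
J = [[0,1],[1,0]] = J⁻¹. -/
def starH {D : Type*} [Ring D] (h : Matrix (Fin 2) (Fin 2) D) :
    Matrix (Fin 2) (Fin 2) D :=
  (!![0, 1; 1, 0] : Matrix (Fin 2) (Fin 2) D) * hᵀ *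
    (!![0, 1; 1, 0] : Matrix (Fin 2) (Fin 2) D)

section Aux

variable {D : Type*} [DivisionRing D]

local notation "Mat" => Matrix (Fin 2) (Fin 2) D

lemma vecMul_eq (v : Fin 2 → D) (M : Mat) : v ᵥ* M = v 0 • M 0 + v 1 • M 1 := by
  funext j
  simp [Matrix.vecMul, dotProduct, Fin.sum_univ_two]

lemma row_mul (M N : Mat) (i : Fin 2) : (M * N) i = M i 0 • N 0 + M i 1 • N 1 := by
  funext j
  simp [Matrix.mul_apply, Fin.sum_univ_two]

lemma exists_left_inv_of_surj (M : Mat) (hs : Function.Surjective M.vecMulLinear) :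
    ∃ N : Mat, N * M = 1 := by
  choose g hg using hs
  refine ⟨Matrix.of fun i => g ((1 : Mat) i), ?_⟩
  ext i j
  have h2 := congrFun (hg ((1 : Mat) i)) j
  simpa [Matrix.mul_apply, Matrix.vecMul, dotProduct] using h2

lemma isUnit_of_left_inv (M x : Mat) (h : x * M = 1) : IsUnit M := by
  have s1 : Function.Surjective M.vecMulLinear := fun v =>
    ⟨v ᵥ* x, by simp [Matrix.vecMul_vecMul, h]⟩
  obtain ⟨N, hN⟩ := exists_left_inv_of_surj M s1
  have hinj : Function.Injective N.vecMulLinear := by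
    have : Function.LeftInverse M.vecMulLinear N.vecMulLinear := fun v => by
      simp [Matrix.vecMul_vecMul, hN]
    exact this.injective
  have s2 : Function.Surjective N.vecMulLinear :=
    LinearMap.injective_iff_surjective.mp hinj
  obtain ⟨N', hN'⟩ := exists_left_inv_of_surj N s2
  have hN'M : N' = M := by rw [← mul_one N', ← hN, ← mul_assoc, hN', one_mul]
  exact ⟨⟨M, N, hN'M ▸ hN', hN⟩, rfl⟩

lemma rows_indep_isUnit (M : Mat)
    (h : ∀ x y : D, x • M 0 + y • M 1 = 0 → x = 0 ∧ y = 0) : IsUnit M := by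
  have hker : LinearMap.ker M.vecMulLinear = ⊥ := by
    rw [LinearMap.ker_eq_bot']
    intro v hv
    have hv' : v 0 • M 0 + v 1 • M 1 = 0 := by
      rw [← vecMul_eq]; exact hv
    obtain ⟨h0, h1⟩ := h _ _ hv'
    funext j
    fin_cases j
    · exact h0
    · exact h1
  have hsurj : Function.Surjective M.vecMulLinear :=
    LinearMap.injective_iff_surjective.mp (LinearMap.ker_eq_bot.mp hker)
  obtain ⟨N, hN⟩ := exists_left_inv_of_surj M hsurj
  exact isUnit_of_left_inv M N hN

lemma starH_eq_self (m : Mat) (h : m 0 0 = m 1 1) : starH m = m := by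
  ext i j
  fin_cases i <;> fin_cases j <;>
    simp [starH, Matrix.mul_apply, Matrix.vecMul, dotProduct,
      Fin.sum_univ_two, h]

/-- all four rows being multiples of one vector contradicts `x*a + y*c = 1`. -/
lemma not_all_smul (a c x y : Mat) (hxy : x * a + y * c = 1) (u : Fin 2 → D)
    (k0 k1 k2 k3 : D) (h0 : a 0 = k0 • u) (h1 : a 1 = k1 • u)
    (h2 : c 0 = k2 • u) (h3 : c 1 = k3 • u) : False := by
  have key : ∀ i : Fin 2, (1 : Mat) i =
      (x i 0 * k0 + x i 1 * k1 + y i 0 * k2 + y i 1 * k3) • u := by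
    intro i
    have h4 : (1 : Mat) i = (x * a) i + (y * c) i := by rw [← hxy]; rfl
    rw [h4, row_mul, row_mul, h0, h1, h2, h3]
    simp only [smul_smul, ← add_smul]
    congr 1
    rw [← add_assoc]
  set t0 := x 0 0 * k0 + x 0 1 * k1 + y 0 0 * k2 + y 0 1 * k3
  set t1 := x 1 0 * k0 + x 1 1 * k1 + y 1 0 * k2 + y 1 1 * k3
  have e00 : (1 : D) = t0 * u 0 := by
    have := congrFun (key 0) 0; simpa [Matrix.one_apply] using this
  have e01 : (0 : D) = t0 * u 1 := by
    have := congrFun (key 0) 1; simpa [Matrix.one_apply] using this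
  have e11 : (1 : D) = t1 * u 1 := by
    have := congrFun (key 1) 1; simpa [Matrix.one_apply] using this
  have ht0 : t0 ≠ 0 := fun h => by simp [h] at e00
  have hu1 : u 1 = 0 := by
    rcases mul_eq_zero.mp e01.symm with h | h
    · exact absurd h ht0
    · exact h
  rw [hu1, mul_zero] at e11
  exact one_ne_zero e11

end Aux

/-- over a division ring D of characteristic 2, for any a, c
generating H = M(2,D) as a left ideal there is a symmetric s with a + sc
invertible; in particular H is *-Euclidean of decomposition length 1. -/
theorem stmt11 (D : Type*) [DivisionRing D] [CharP D 2] :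
    (∀ a c : Matrix (Fin 2) (Fin 2) D,
      (∃ x y : Matrix (Fin 2) (Fin 2) D, x * a + y * c = 1) →
      ∃ s : Matrix (Fin 2) (Fin 2) D, starH s = s ∧ IsUnit (a + s * c)) ∧
    (∀ a c : Matrix (Fin 2) (Fin 2) D,
      (∃ x y : Matrix (Fin 2) (Fin 2) D, x * a + y * c = 1) →
      starH a * c = starH c * a →
      ∃ s r : Matrix (Fin 2) (Fin 2) D, starH s = s ∧ IsUnit r ∧ a = s * c + r) := by
  have matchar : ∀ m : Matrix (Fin 2) (Fin 2) D, m + m = 0 := fun m => by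
    ext i j
    exact CharTwo.add_self_eq_zero _
  have key2 : ∀ x y z w : D, x + z + (y + w) = 0 → x + y = z + w := by
    intro x y z w h
    have h2 : x + y + (z + w) = 0 := by rw [← h]; abel
    have hns : -(z + w) = z + w := neg_eq_of_add_eq_zero_left (CharTwo.add_self_eq_zero _)
    exact (eq_neg_of_add_eq_zero_left h2).trans hns
  have part1 : ∀ a c : Matrix (Fin 2) (Fin 2) D,
      (∃ x y : Matrix (Fin 2) (Fin 2) D, x * a + y * c = 1) →
      ∃ s : Matrix (Fin 2) (Fin 2) D, starH s = s ∧ IsUnit (a + s * c) := by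
    intro a c ⟨x, y, hxy⟩
    by_cases hc : ∀ p q : D, p • c 0 + q • c 1 = 0 → p = 0 ∧ q = 0
    · -- c invertible
      have hcu : IsUnit c := rows_indep_isUnit c hc
      obtain ⟨u, hu⟩ := hcu
      set b : Matrix (Fin 2) (Fin 2) D := a * (u⁻¹ : (Matrix (Fin 2) (Fin 2) D)ˣ).val with hb
      set δ : D := b 0 0 + b 1 1 with hδ
      have hbc : b * c = a := by
        rw [hb, ← hu, mul_assoc, Units.inv_mul, mul_one]
      have main : ∀ v : Matrix (Fin 2) (Fin 2) D, IsUnit v →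
          v 0 0 + v 1 1 = δ →
          ∃ s : Matrix (Fin 2) (Fin 2) D, starH s = s ∧ IsUnit (a + s * c) := by
        intro v hv htr
        refine ⟨v + b, starH_eq_self _ ?_, ?_⟩
        · show v 0 0 + b 0 0 = v 1 1 + b 1 1
          apply key2
          rw [htr, ← hδ]
          exact CharTwo.add_self_eq_zero δ
        · have h2 : a + (v + b) * c = v * c := by
            rw [add_mul, hbc, add_comm (v * c) a, ← add_assoc, matchar, zero_add]
          rw [h2]
          exact hv.mul ⟨u, hu⟩
      by_cases h1 : δ = 1
      · refine main !![(0:D),1;1,1] (rows_indep_isUnit _ ?_) (by norm_num [h1])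
        intro p q h
        have h0 := congrFun h 0
        have h1' := congrFun h 1
        simp at h0 h1'
        subst h0
        simp at h1'
        exact ⟨h1', rfl⟩
      · refine main !![1+δ, 0; 0, 1] (rows_indep_isUnit _ ?_) ?_
        · intro p q h
          have hd : (1:D) + δ ≠ 0 := fun hz => by
            apply h1
            rw [← CharTwo.neg_eq δ, neg_eq_iff_add_eq_zero, add_comm]
            exact hz
          have h0 := congrFun h 0
          have h1' := congrFun h 1
          simp at h0 h1'
          rcases h0 with h | h
          · exact ⟨h, h1'⟩
          · exact absurd h hd
        · norm_num
          rw [add_assoc, add_comm δ 1, ← add_assoc, CharTwo.add_self_eq_zero,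
            zero_add]
    · -- c has rank ≤ 1
      push_neg at hc
      obtain ⟨p, q, hpq, hne⟩ := hc
      obtain ⟨w, α, β, hc0, hc1, hαβ⟩ :
          ∃ (w : Fin 2 → D) (α β : D), c 0 = α • w ∧ c 1 = β • w ∧ (α = 1 ∨ β = 1) := by
        by_cases hp : p = 0
        · have hq : q ≠ 0 := hne hp
          have hc1' : c 1 = 0 := by
            rw [hp, zero_smul, zero_add] at hpq
            have := congrArg (fun z => q⁻¹ • z) hpq
            simpa [smul_smul, inv_mul_cancel₀ hq] using this
          exact ⟨c 0, 1, 0, (one_smul _ _).symm, by rw [hc1', zero_smul], Or.inl rfl⟩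
        · have key : c 0 = (p⁻¹ * q) • c 1 := by
            have h2 : p • c 0 = q • c 1 := by
              rw [← CharTwo.neg_eq (q • c 1)]
              exact eq_neg_of_add_eq_zero_left hpq
            calc c 0 = p⁻¹ • (p • c 0) := by
                  rw [smul_smul, inv_mul_cancel₀ hp, one_smul]
              _ = (p⁻¹ * q) • c 1 := by rw [h2, smul_smul]
          exact ⟨c 1, p⁻¹ * q, 1, key, (one_smul _ _).symm, Or.inr rfl⟩
      by_cases hA : ∀ p q : D, p • a 0 + q • a 1 = 0 → p = 0 ∧ q = 0
      · refine ⟨0, starH_eq_self 0 (by simp), ?_⟩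
        rw [zero_mul, add_zero]
        exact rows_indep_isUnit a hA
      · push_neg at hA
        obtain ⟨p', q', hpq', hne'⟩ := hA
        obtain ⟨v, γ, ε, ha0, ha1, hγε⟩ :
            ∃ (v : Fin 2 → D) (γ ε : D), a 0 = γ • v ∧ a 1 = ε • v ∧ (γ = 1 ∨ ε = 1) := by
          by_cases hp : p' = 0
          · have hq : q' ≠ 0 := hne' hp
            have ha1' : a 1 = 0 := by
              rw [hp, zero_smul, zero_add] at hpq'
              have := congrArg (fun z => q'⁻¹ • z) hpq'
              simpa [smul_smul, inv_mul_cancel₀ hq] using this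
            exact ⟨a 0, 1, 0, (one_smul _ _).symm, by rw [ha1', zero_smul], Or.inl rfl⟩
          · have key : a 0 = (p'⁻¹ * q') • a 1 := by
              have h2 : p' • a 0 = q' • a 1 := by
                rw [← CharTwo.neg_eq (q' • a 1)]
                exact eq_neg_of_add_eq_zero_left hpq'
              calc a 0 = p'⁻¹ • (p' • a 0) := by
                    rw [smul_smul, inv_mul_cancel₀ hp, one_smul]
                _ = (p'⁻¹ * q') • a 1 := by rw [h2, smul_smul]
            exact ⟨a 1, p'⁻¹ * q', 1, key, (one_smul _ _).symm, Or.inr rfl⟩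
        -- v, w are independent
        have hvw : ∀ r t : D, r • v + t • w = 0 → r = 0 ∧ t = 0 := by
          intro r t h
          by_cases hr : r = 0
          · refine ⟨hr, ?_⟩
            by_contra ht
            have hw0 : w = 0 := by
              rw [hr, zero_smul, zero_add] at h
              have := congrArg (fun z => t⁻¹ • z) h
              simpa [smul_smul, inv_mul_cancel₀ ht] using this
            exact not_all_smul a c x y hxy v γ ε 0 0 ha0 ha1
              (by rw [hc0, hw0, smul_zero, zero_smul])
              (by rw [hc1, hw0, smul_zero, zero_smul])
          · exfalso
            have hveq : v = (r⁻¹ * t) • w := by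
              have h2 : r • v = t • w := by
                rw [← CharTwo.neg_eq (t • w)]
                exact eq_neg_of_add_eq_zero_left h
              calc v = r⁻¹ • (r • v) := by
                    rw [smul_smul, inv_mul_cancel₀ hr, one_smul]
                _ = (r⁻¹ * t) • w := by rw [h2, smul_smul]
            exact not_all_smul a c x y hxy w (γ * (r⁻¹ * t)) (ε * (r⁻¹ * t)) α β
              (by rw [ha0, hveq, smul_smul]) (by rw [ha1, hveq, smul_smul]) hc0 hc1
        -- choose lam, mu making the rows of a + s*c independent
        obtain ⟨lam, mu, hrows⟩ :
            ∃ lam mu : D, ∀ r t : D,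
              r • (a 0 + lam • w) + t • (a 1 + mu • w) = 0 → r = 0 ∧ t = 0 := by
          rcases hγε with hγ | hε
          · refine ⟨0, 1, fun r t h => ?_⟩
            rw [ha0, ha1, hγ, one_smul, zero_smul, add_zero, one_smul] at h
            have h2 : (r + t * ε) • v + t • w = 0 := by
              calc (r + t * ε) • v + t • w
                  = r • v + (t • (ε • v) + t • w) := by
                    rw [add_smul, mul_smul, add_assoc]
                _ = r • v + t • (ε • v + w) := by rw [smul_add]
                _ = 0 := h
            obtain ⟨h3, h4⟩ := hvw _ _ h2
            subst h4
            simp at h3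
            exact ⟨h3, rfl⟩
          · refine ⟨1, 0, fun r t h => ?_⟩
            rw [ha0, ha1, hε, one_smul, zero_smul, add_zero, one_smul] at h
            have h2 : (r * γ + t) • v + r • w = 0 := by
              calc (r * γ + t) • v + r • w
                  = r • (γ • v) + t • v + r • w := by
                    rw [add_smul, mul_smul]
                _ = r • (γ • v + w) + t • v := by rw [smul_add]; abel
                _ = 0 := h
            obtain ⟨h3, h4⟩ := hvw _ _ h2
            subst h4
            simp at h3
            exact ⟨rfl, h3⟩
        -- build symmetric s with (s*c) 0 = lam • w and (s*c) 1 = mu • w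
        obtain ⟨s, hsym, hs0, hs1⟩ :
            ∃ s : Matrix (Fin 2) (Fin 2) D, starH s = s ∧
              (s * c) 0 = lam • w ∧ (s * c) 1 = mu • w := by
          rcases hαβ with hα | hβ
          · refine ⟨!![lam, 0; mu + lam * β, lam], starH_eq_self _ (by norm_num), ?_, ?_⟩
            · rw [row_mul, hc0, hc1, hα]
              norm_num [smul_smul]
            · rw [row_mul, hc0, hc1, hα]
              norm_num [smul_smul, ← add_smul]
              congr 1
              rw [add_assoc, CharTwo.add_self_eq_zero, add_zero]
          · refine ⟨!![mu, lam + mu * α; 0, mu], starH_eq_self _ (by norm_num), ?_, ?_⟩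
            · rw [row_mul, hc0, hc1, hβ]
              norm_num [smul_smul, ← add_smul]
              congr 1
              rw [add_comm lam, ← add_assoc, CharTwo.add_self_eq_zero, zero_add]
            · rw [row_mul, hc0, hc1, hβ]
              norm_num [smul_smul]
        refine ⟨s, hsym, rows_indep_isUnit _ ?_⟩
        intro r t h
        apply hrows r t
        have e0 : (a + s * c) 0 = a 0 + lam • w := by rw [show (a + s*c) 0 = a 0 + (s*c) 0 from rfl, hs0]
        have e1 : (a + s * c) 1 = a 1 + mu • w := by rw [show (a + s*c) 1 = a 1 + (s*c) 1 from rfl, hs1]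
        rw [e0, e1] at h
        exact h
  refine ⟨part1, ?_⟩
  intro a c h hcomm
  obtain ⟨s, hs, hu⟩ := part1 a c h
  refine ⟨s, a + s * c, hs, hu, ?_⟩
  rw [← add_assoc]
  nth_rewrite 1 [show a = 0 + a by rw [zero_add]]
  rw [← matchar (s * c)]
  abel
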